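/- Let [T1,T1'] and [T2,T2'] be Tamari intervals of size n with interval-posets P1 and P2. Then T1 ≥ T2 and T1' ≤ T2' (i.e., the interval [T1,T1'] is contained in the interval [T2,T2']) if and only if every relation of P2 is a relation of P1. -/

import Mathlib

/-- Planar binary trees: empty, or a node with a left and a right subtree. -/
inductive BinTree : Type where
  | leaf : BinTree
  | node : BinTree → BinTree → BinTree
  deriving DecidableEq

namespace BinTree

/-- Size: number of internal nodes. -/
def size : BinTree → ℕ
  | leaf => 0
  | node l r => l.size + r.size + 1

/-- `sub T o a b` : in the binary-search-tree labelling of `T` shifted by `o`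
(its labels are `o+1, …, o+T.size`), the node labelled `a` lies in the subtree
rooted at the node labelled `b`, i.e. `a ⊴_T b`. -/
def sub : BinTree → ℕ → ℕ → ℕ → Prop
  | leaf, _, _, _ => False
  | node l r, o, a, b =>
      (b = o + l.size + 1 ∧ o + 1 ≤ a ∧ a ≤ o + l.size + r.size + 1) ∨
      l.sub o a b ∨ r.sub (o + l.size + 1) a b

/-- One right rotation, applied at any position of the tree. -/
inductive Rot : BinTree → BinTree → Prop
  | base (A B C : BinTree) : Rot (node (node A B) C) (node A (node B C))
  | left {l l' : BinTree} (r : BinTree) : Rot l l' → Rot (node l r) (node l' r)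
  | right (l : BinTree) {r r' : BinTree} : Rot r r' → Rot (node l r) (node l r')

end BinTree

/-- Tamari order: reflexive-transitive closure of right rotation. -/
def tamariLE : BinTree → BinTree → Prop := Relation.ReflTransGen BinTree.Rot

/-- `incRel T a c` : `a` is below `c` in the initial forest `inc T`. -/
def incRel (T : BinTree) (a c : ℕ) : Prop := a < c ∧ T.sub 0 a c

/-- `decRel T c a` : `c` is below `a` in the final forest `dec T`. -/
def decRel (T : BinTree) (c a : ℕ) : Prop := a < c ∧ T.sub 0 c a

/-- The partial order on `{1, …, n}` generated by a family `r` of relations. -/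
def genClos (n : ℕ) (r : ℕ → ℕ → Prop) : ℕ → ℕ → Prop :=
  fun a b => (a = b ∧ 1 ≤ a ∧ a ≤ n) ∨ Relation.TransGen r a b

/-- The relation of the interval-poset `P_{[T1,T2]}` of a Tamari interval: the
partial order on `{1, …, n}` generated by the relations of `dec T1` together
with those of `inc T2`. -/
def pairRel (n : ℕ) (T1 T2 : BinTree) : ℕ → ℕ → Prop :=
  genClos n (fun x y => decRel T1 x y ∨ incRel T2 x y)

namespace BinTree

lemma sub_bounds : ∀ (T : BinTree) (o a b : ℕ), T.sub o a b →
    o + 1 ≤ a ∧ a ≤ o + T.size ∧ o + 1 ≤ b ∧ b ≤ o + T.size := by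
  intro T
  induction T with
  | leaf => intro o a b h; exact h.elim
  | node l r ihl ihr =>
    intro o a b h
    rcases h with ⟨hb, h1, h2⟩ | h | h
    · simp [size]; omega
    · have := ihl o a b h; simp [size] at this ⊢; omega
    · have := ihr (o + l.size + 1) a b h; simp [size] at this ⊢; omega

lemma sub_trans : ∀ (T : BinTree) (o a b c : ℕ), T.sub o a b → T.sub o b c → T.sub o a c := by
  intro T
  induction T with
  | leaf => intro o a b c h; exact h.elim
  | node l r ihl ihr =>
    intro o a b c h1 h2
    have hb1 := sub_bounds _ _ _ _ h1
    rcases h2 with ⟨hc, hc1, hc2⟩ | h2 | h2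
    · left; simp [size] at hb1; exact ⟨hc, by omega, by omega⟩
    · have hb2 := sub_bounds _ _ _ _ h2
      rcases h1 with ⟨hb, _, _⟩ | h1 | h1
      · omega
      · exact Or.inr (Or.inl (ihl o a b c h1 h2))
      · have := sub_bounds _ _ _ _ h1; omega
    · have hb2 := sub_bounds _ _ _ _ h2
      rcases h1 with ⟨hb, _, _⟩ | h1 | h1
      · omega
      · have := sub_bounds _ _ _ _ h1; omega
      · exact Or.inr (Or.inr (ihr _ a b c h1 h2))

lemma sub_node_left {l r : BinTree} {o a b : ℕ} (hb : b ≤ o + l.size)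
    (h : (node l r).sub o a b) : l.sub o a b := by
  rcases h with ⟨hb', _, _⟩ | h | h
  · omega
  · exact h
  · have := sub_bounds _ _ _ _ h; omega

lemma sub_node_right {l r : BinTree} {o a b : ℕ} (hb : o + l.size + 2 ≤ b)
    (h : (node l r).sub o a b) : r.sub (o + l.size + 1) a b := by
  rcases h with ⟨hb', _, _⟩ | h | h
  · omega
  · have := sub_bounds _ _ _ _ h; omega
  · exact h

lemma rot_size {S T : BinTree} (h : Rot S T) : S.size = T.size := by
  induction h with
  | base A B C => simp [size]; omega
  | left r h ih => simp [size]; omega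
  | right l h ih => simp [size]; omega

end BinTree
namespace BinTree

lemma offset_congr {T : BinTree} {o o' a b : ℕ} (h : o = o') : T.sub o a b → T.sub o' a b := by
  rw [h]; exact id

lemma rot_root_fwd (A B C : BinTree) (o a b : ℕ)
    (h : (node (node A B) C).sub o a b) :
    (node A (node B C)).sub o a b ∨ b = o + A.size + B.size + 2 := by
  rcases h with ⟨hb, h1, h2⟩ | (⟨hb, h1, h2⟩ | h | h) | h
  · right; simp [size] at hb; omega
  · left; left; simp [size] at h2 ⊢; exact ⟨hb, h1, by omega⟩
  · left; right; left; exact h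
  · left; right; right; right; left; exact h
  · left; right; right; right; right
    exact offset_congr (by simp [size]; omega) h

lemma rot_root_back (A B C : BinTree) (o a b : ℕ)
    (h : (node A (node B C)).sub o a b) :
    (node (node A B) C).sub o a b ∨ b = o + A.size + 1 := by
  rcases h with ⟨hb, h1, h2⟩ | h | (⟨hb, h1, h2⟩ | h | h)
  · right; omega
  · left; right; left; right; left; exact h
  · left; left; simp [size] at hb ⊢; exact ⟨by omega, by omega, by omega⟩
  · left; right; left; right; right; exact h
  · left; right; right; exact offset_congr (by simp [size]; omega) h

lemma rot_dec {S T : BinTree} (h : Rot S T) :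
    ∀ o a b, b < a → S.sub o a b → T.sub o a b := by
  induction h with
  | base A B C =>
    intro o a b hba h
    rcases h with ⟨hb, h1, h2⟩ | (⟨hb, h1, h2⟩ | h | h) | h
    · right; right; left; simp [size] at hb h2 ⊢; omega
    · left; simp [size] at h2 ⊢; exact ⟨hb, h1, by omega⟩
    · right; left; exact h
    · right; right; right; left; exact h
    · right; right; right; right; exact offset_congr (by simp [size]; omega) h
  | left r hr ih =>
    intro o a b hba h
    rcases h with ⟨hb, h1, h2⟩ | h | h
    · left; rw [← rot_size hr]; exact ⟨hb, h1, h2⟩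
    · right; left; exact ih o a b hba h
    · right; right; exact offset_congr (by rw [rot_size hr]) h
  | right l hr ih =>
    intro o a b hba h
    rcases h with ⟨hb, h1, h2⟩ | h | h
    · left; rw [← rot_size hr]; exact ⟨hb, h1, h2⟩
    · right; left; exact h
    · right; right; exact ih _ a b hba h

lemma rot_inc {S T : BinTree} (h : Rot S T) :
    ∀ o a b, a < b → T.sub o a b → S.sub o a b := by
  induction h with
  | base A B C =>
    intro o a b hab h
    rcases h with ⟨hb, h1, h2⟩ | h | (⟨hb, h1, h2⟩ | h | h)
    · right; left; left; simp [size] at h2 ⊢; omega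
    · right; left; right; left; exact h
    · left; simp [size] at hb ⊢; omega
    · right; left; right; right; exact h
    · right; right; exact offset_congr (by simp [size]; omega) h
  | left r hr ih =>
    intro o a b hab h
    rcases h with ⟨hb, h1, h2⟩ | h | h
    · left; rw [rot_size hr]; exact ⟨hb, h1, h2⟩
    · right; left; exact ih o a b hab h
    · right; right; exact offset_congr (by rw [← rot_size hr]) h
  | right l hr ih =>
    intro o a b hab h
    rcases h with ⟨hb, h1, h2⟩ | h | h
    · left; rw [rot_size hr]; exact ⟨hb, h1, h2⟩
    · right; left; exact h
    · right; right; exact ih _ a b hab h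

end BinTree
lemma tamari_size {S T : BinTree} (h : tamariLE S T) : S.size = T.size := by
  induction h with
  | refl => rfl
  | tail _ h ih => rw [ih, BinTree.rot_size h]

lemma tamari_dec {S T : BinTree} (h : tamariLE S T) :
    ∀ o a b, b < a → S.sub o a b → T.sub o a b := by
  induction h with
  | refl => exact fun _ _ _ _ h => h
  | tail _ h ih => exact fun o a b hba hs => BinTree.rot_dec h o a b hba (ih o a b hba hs)

lemma tamari_inc {S T : BinTree} (h : tamariLE S T) :
    ∀ o a b, a < b → T.sub o a b → S.sub o a b := by
  induction h with
  | refl => exact fun _ _ _ _ h => h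
  | tail _ h ih => exact fun o a b hab hs => ih o a b hab (BinTree.rot_inc h o a b hab hs)

lemma tamari_node_left {L L' : BinTree} (R : BinTree) (h : tamariLE L L') :
    tamariLE (BinTree.node L R) (BinTree.node L' R) :=
  Relation.ReflTransGen.lift (fun x => BinTree.node x R) (fun _ _ hr => BinTree.Rot.left R hr) _ _ h

lemma tamari_node_right (L : BinTree) {R R' : BinTree} (h : tamariLE R R') :
    tamariLE (BinTree.node L R) (BinTree.node L R') :=
  Relation.ReflTransGen.lift (fun x => BinTree.node L x) (fun _ _ hr => BinTree.Rot.right L hr) _ _ h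

namespace BinTree

/-- `k` is a label on the left spine of `T` (with offset `o`). -/
def leftSpine : BinTree → ℕ → ℕ → Prop
  | leaf, _, _ => False
  | node l _, o, k => k = o + l.size + 1 ∨ leftSpine l o k

/-- `k` is a label on the right spine of `T` (with offset `o`). -/
def rightSpine : BinTree → ℕ → ℕ → Prop
  | leaf, _, _ => False
  | node l r, o, k => k = o + l.size + 1 ∨ rightSpine r (o + l.size + 1) k

lemma spine_or : ∀ (T : BinTree) (o k : ℕ), o + 1 ≤ k → k ≤ o + T.size →
    leftSpine T o k ∨ ∃ m, m < k ∧ T.sub o k m := by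
  intro T
  induction T with
  | leaf => intro o k h1 h2; simp [size] at h2; omega
  | node l r ihl ihr =>
    intro o k h1 h2
    rcases Nat.lt_trichotomy k (o + l.size + 1) with hk | hk | hk
    · rcases ihl o k h1 (by omega) with h | ⟨m, hm, hs⟩
      · exact Or.inl (Or.inr h)
      · exact Or.inr ⟨m, hm, Or.inr (Or.inl hs)⟩
    · exact Or.inl (Or.inl hk)
    · refine Or.inr ⟨o + l.size + 1, hk, Or.inl ⟨rfl, by omega, ?_⟩⟩
      simp [size] at h2; omega

lemma rspine_or : ∀ (T : BinTree) (o k : ℕ), o + 1 ≤ k → k ≤ o + T.size →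
    rightSpine T o k ∨ ∃ m, k < m ∧ T.sub o k m := by
  intro T
  induction T with
  | leaf => intro o k h1 h2; simp [size] at h2; omega
  | node l r ihl ihr =>
    intro o k h1 h2
    rcases Nat.lt_trichotomy k (o + l.size + 1) with hk | hk | hk
    · refine Or.inr ⟨o + l.size + 1, hk, Or.inl ⟨rfl, by omega, ?_⟩⟩
      omega
    · exact Or.inl (Or.inl hk)
    · have h2' : k ≤ o + l.size + 1 + r.size := by simp [size] at h2; omega
      rcases ihr (o + l.size + 1) k hk h2' with h | ⟨m, hm, hs⟩
      · exact Or.inl (Or.inr h)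
      · exact Or.inr ⟨m, hm, Or.inr (Or.inr hs)⟩

/-- Move a left-spine label `k` up to the root by right rotations. -/
lemma spine_up : ∀ (S : BinTree) (o k : ℕ), leftSpine S o k →
    ∃ A B : BinTree, tamariLE S (node A B) ∧ (node A B).size = S.size ∧
      o + A.size + 1 = k ∧
      ∀ a b, (node A B).sub o a b → S.sub o a b ∨ b = k := by
  intro S
  induction S with
  | leaf => intro o k h; exact h.elim
  | node L R ihl ihr =>
    intro o k h
    rcases h with h | h
    · exact ⟨L, R, Relation.ReflTransGen.refl, rfl, h.symm, fun a b hs => Or.inl hs⟩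
    · obtain ⟨A, B, hle, hsz, hk, hsub⟩ := ihl o k h
      refine ⟨A, node B R, ?_, ?_, hk, ?_⟩
      · exact Relation.ReflTransGen.tail (tamari_node_left R hle) (Rot.base A B R)
      · simp [size] at hsz ⊢; omega
      · intro a b hs
        rcases rot_root_back A B R o a b hs with hs | hb
        · -- hs : (node (node A B) R).sub o a b
          rcases hs with ⟨hb, h1, h2⟩ | hs | hs
          · left; left
            simp [size] at hsz hb h2 ⊢
            omega
          · rcases hsub a b hs with hs' | hb
            · exact Or.inl (Or.inr (Or.inl hs'))
            · exact Or.inr hb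
          · left; right; right
            refine offset_congr ?_ hs
            simp [size] at hsz ⊢; omega
        · right; omega

/-- Move a right-spine label `k` of `T` up to the root by inverse rotations. -/
lemma spine_down : ∀ (T : BinTree) (o k : ℕ), rightSpine T o k →
    ∃ A B : BinTree, tamariLE (node A B) T ∧ (node A B).size = T.size ∧
      o + A.size + 1 = k ∧
      ∀ a b, (node A B).sub o a b → T.sub o a b ∨ b = k := by
  intro T
  induction T with
  | leaf => intro o k h; exact h.elim
  | node L R ihl ihr =>
    intro o k h
    rcases h with h | h
    · exact ⟨L, R, Relation.ReflTransGen.refl, rfl, h.symm, fun a b hs => Or.inl hs⟩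
    · obtain ⟨A', B', hle, hsz, hk, hsub⟩ := ihr (o + L.size + 1) k h
      refine ⟨node L A', B', ?_, ?_, ?_, ?_⟩
      · exact Relation.ReflTransGen.head (Rot.base L A' B') (tamari_node_right L hle)
      · simp [size] at hsz ⊢; omega
      · simp [size]; omega
      · intro a b hs
        rcases rot_root_fwd L A' B' o a b hs with hs | hb
        · -- hs : (node L (node A' B')).sub o a b
          rcases hs with ⟨hb, h1, h2⟩ | hs | hs
          · left; left
            simp [size] at hsz h2 ⊢
            omega
          · exact Or.inl (Or.inr (Or.inl hs))
          · rcases hsub a b hs with hs' | hb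
            · exact Or.inl (Or.inr (Or.inr hs'))
            · exact Or.inr hb
        · right; omega

end BinTree
namespace BinTree

lemma size_eq_zero {T : BinTree} (h : T.size = 0) : T = leaf := by
  cases T with
  | leaf => rfl
  | node l r => simp [size] at h

/-- no label is below a smaller label than the root, at the root position -/
lemma not_sub_root_lt {L R : BinTree} {o m : ℕ} (hm : m < o + L.size + 1)
    (h : (node L R).sub o (o + L.size + 1) m) : False := by
  rcases h with ⟨hb, _, _⟩ | h | h
  · omega
  · have := sub_bounds _ _ _ _ h; omega
  · have := sub_bounds _ _ _ _ h; omega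

lemma not_sub_root_gt {L R : BinTree} {o m : ℕ} (hm : o + L.size + 1 < m)
    (h : (node L R).sub o (o + L.size + 1) m) : False := by
  rcases h with ⟨hb, _, _⟩ | h | h
  · omega
  · have := sub_bounds _ _ _ _ h; omega
  · have := sub_bounds _ _ _ _ h; omega

lemma dec_converse : ∀ (n : ℕ) (S T : BinTree) (o : ℕ), S.size = n → T.size = n →
    (∀ a b, b < a → S.sub o a b → T.sub o a b) → tamariLE S T := by
  intro n
  induction n using Nat.strong_induction_on with
  | _ n ih =>
    intro S T o hS hT H
    cases n with
    | zero => rw [size_eq_zero hS, size_eq_zero hT]; exact Relation.ReflTransGen.refl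
    | succ n' =>
      cases T with
      | leaf => simp [size] at hT
      | node Lt Rt =>
        -- the root label of T
        set k := o + Lt.size + 1 with hk
        have hkub : k ≤ o + S.size := by simp [size] at hT; omega
        have hspine : leftSpine S o k := by
          rcases spine_or S o k (by omega) hkub with h | ⟨m, hm, hs⟩
          · exact h
          · exact absurd (H k m hm hs) (fun h => not_sub_root_lt hm h)
        obtain ⟨A, B, hle, hsz, hrk, hsub⟩ := spine_up S o k hspine
        have hsizes : A.size = Lt.size ∧ B.size = Rt.size := by
          simp [size] at hsz hT ⊢; omega
        have H' : ∀ a b, b < a → (node A B).sub o a b → (node Lt Rt).sub o a b := by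
          intro a b hba hs
          rcases hsub a b hs with hs' | hb
          · exact H a b hba hs'
          · have hbnd := sub_bounds _ _ _ _ hs
            left
            refine ⟨by omega, by omega, ?_⟩
            simp [size] at hsz hS hT hbnd
            omega
        have hLA : tamariLE A Lt := by
          refine ih Lt.size (by simp [size] at hT; omega) A Lt o hsizes.1 rfl ?_
          intro a b hba hs
          have hbnd := sub_bounds _ _ _ _ hs
          refine sub_node_left (by omega) (H' a b hba (Or.inr (Or.inl hs)))
        have hRB : tamariLE B Rt := by
          refine ih Rt.size (by simp [size] at hT; omega) B Rt (o + Lt.size + 1) hsizes.2 rfl ?_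
          intro a b hba hs
          have hbnd := sub_bounds _ _ _ _ hs
          have hs2 : (node A B).sub o a b := by
            right; right; exact offset_congr (by omega) hs
          exact sub_node_right (by omega) (H' a b hba hs2)
        exact hle.trans ((tamari_node_left B hLA).trans (tamari_node_right Lt hRB))

lemma inc_converse : ∀ (n : ℕ) (S T : BinTree) (o : ℕ), S.size = n → T.size = n →
    (∀ a b, a < b → T.sub o a b → S.sub o a b) → tamariLE S T := by
  intro n
  induction n using Nat.strong_induction_on with
  | _ n ih =>
    intro S T o hS hT H
    cases n with
    | zero => rw [size_eq_zero hS, size_eq_zero hT]; exact Relation.ReflTransGen.refl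
    | succ n' =>
      cases S with
      | leaf => simp [size] at hS
      | node Ls Rs =>
        set k := o + Ls.size + 1 with hk
        have hkub : k ≤ o + T.size := by simp [size] at hS; omega
        have hspine : rightSpine T o k := by
          rcases rspine_or T o k (by omega) hkub with h | ⟨m, hm, hs⟩
          · exact h
          · exact absurd (H k m hm hs) (fun h => not_sub_root_gt hm h)
        obtain ⟨A, B, hle, hsz, hrk, hsub⟩ := spine_down T o k hspine
        have hsizes : A.size = Ls.size ∧ B.size = Rs.size := by
          simp [size] at hsz hS hT ⊢; omega
        have H' : ∀ a b, a < b → (node A B).sub o a b → (node Ls Rs).sub o a b := by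
          intro a b hab hs
          rcases hsub a b hs with hs' | hb
          · exact H a b hab hs'
          · have hbnd := sub_bounds _ _ _ _ hs
            left
            refine ⟨by omega, by omega, ?_⟩
            simp [size] at hsz hS hT hbnd
            omega
        have hLA : tamariLE Ls A := by
          refine ih Ls.size (by simp [size] at hS; omega) Ls A o rfl hsizes.1 ?_
          intro a b hab hs
          have hbnd := sub_bounds _ _ _ _ hs
          refine sub_node_left (by omega) (H' a b hab (Or.inr (Or.inl hs)))
        have hRB : tamariLE Rs B := by
          refine ih Rs.size (by simp [size] at hS; omega) Rs B (o + Ls.size + 1) rfl hsizes.2 ?_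
          intro a b hab hs
          have hbnd := sub_bounds _ _ _ _ hs
          have hs2 : (node A B).sub o a b := by
            right; right; exact offset_congr (by omega) hs
          exact sub_node_right (by omega) (H' a b hab hs2)
        exact ((tamari_node_left Rs hLA).trans (tamari_node_right A hRB)).trans hle

end BinTree

/-- For a Tamari interval `T1 ≤ T1'`, any chain of generating relations of the
interval-poset gives a `sub`-relation in both trees. -/
lemma transGen_sub {T1 T1' : BinTree} (hI : tamariLE T1 T1') {a b : ℕ}
    (h : Relation.TransGen (fun x y => decRel T1 x y ∨ incRel T1' x y) a b) :
    T1.sub 0 a b ∧ T1'.sub 0 a b := by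
  induction h with
  | single hr =>
    rcases hr with ⟨hlt, hs⟩ | ⟨hlt, hs⟩
    · exact ⟨hs, tamari_dec hI 0 _ _ hlt hs⟩
    · exact ⟨tamari_inc hI 0 _ _ hlt hs, hs⟩
  | tail h hr ih =>
    rcases hr with ⟨hlt, hs⟩ | ⟨hlt, hs⟩
    · exact ⟨BinTree.sub_trans _ _ _ _ _ ih.1 hs,
        BinTree.sub_trans _ _ _ _ _ ih.2 (tamari_dec hI 0 _ _ hlt hs)⟩
    · exact ⟨BinTree.sub_trans _ _ _ _ _ ih.1 (tamari_inc hI 0 _ _ hlt hs),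
        BinTree.sub_trans _ _ _ _ _ ih.2 hs⟩


/-- `[T1,T1'] ⊆ [T2,T2']` iff every relation of `P_{[T2,T2']}` is a relation
of `P_{[T1,T1']}`. -/
theorem stmt4 (n : ℕ) (T1 T1' T2 T2' : BinTree)
    (h1 : T1.size = n) (h1' : T1'.size = n) (h2 : T2.size = n) (h2' : T2'.size = n)
    (hI1 : tamariLE T1 T1') (hI2 : tamariLE T2 T2') :
    (tamariLE T2 T1 ∧ tamariLE T1' T2') ↔
      ∀ a b, pairRel n T2 T2' a b → pairRel n T1 T1' a b := by
  --
  constructor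
  · rintro ⟨hA, hB⟩ a b hp
    rcases hp with h | h
    · exact Or.inl h
    · refine Or.inr (Relation.TransGen.mono ?_ _ _ h)
      rintro x y (⟨hlt, hs⟩ | ⟨hlt, hs⟩)
      · exact Or.inl ⟨hlt, tamari_dec hA 0 _ _ hlt hs⟩
      · exact Or.inr ⟨hlt, tamari_inc hB 0 _ _ hlt hs⟩
  · intro H
    constructor
    · refine BinTree.dec_converse n T2 T1 0 h2 h1 ?_
      intro a b hba hs
      have hp := H a b (Or.inr (Relation.TransGen.single (Or.inl ⟨hba, hs⟩)))
      rcases hp with ⟨heq, _⟩ | h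
      · omega
      · exact (transGen_sub hI1 h).1
    · refine BinTree.inc_converse n T1' T2' 0 h1' h2' ?_
      intro a b hab hs
      have hp := H a b (Or.inr (Relation.TransGen.single (Or.inr ⟨hab, hs⟩)))
      rcases hp with ⟨heq, _⟩ | h
      · omega
      · exact (transGen_sub hI1 h).2
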